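/- Let π ∈ S_d and let τ = (j, j+1) be an adjacent transposition with 1 ≤ j < d and π(j) ≠ j+1 (a 'nice Coxeter conjugation'). Suppose neither j nor j+1 is a fixed point of π and π(j+1) ≠ j. Define π' on {1,...,d}∖{j+1} by π'(j) = π(j+1), π'(k) = π(j) if π(k) = j+1, and π'(k) = π(k) otherwise. Then the number of antiexceedances of π' is at most the number of antiexceedances of π. -/

import Mathlib

/-- The number of antiexceedances of a permutation: indices `i` with `π i ≤ i`. -/
def aex {d : ℕ} (π : Equiv.Perm (Fin d)) : ℕ :=
  (Finset.univ.filter (fun i => π i ≤ i)).card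

/-- Given `π ∈ S_d` and `j` with `π(j) ≠ j+1`, neither `j` nor `j+1` a fixed
point, and `π(j+1) ≠ j`, the permutation `π'` of `{1,…,d}∖{j+1}` defined by
`π'(j) = π(j+1)`, `π'(k) = π(j)` when `π(k) = j+1`, and `π'(k) = π(k)`
otherwise, has at most as many antiexceedances as `π`. -/
theorem aex_pi'_le (d : ℕ) (π : Equiv.Perm (Fin d)) (j j1 : Fin d)
    (hj1 : (j1 : ℕ) = (j : ℕ) + 1)
    (hnice : π j ≠ j1) (hfj : π j ≠ j) (hfj1 : π j1 ≠ j1) (h4 : π j1 ≠ j) :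
    ((Finset.univ.erase j1).filter
        (fun k => (if k = j then π j1 else if π k = j1 then π j else π k) ≤ k)).card
      ≤ aex π := by
  classical
  unfold aex
  set m := π.symm j1 with hm
  have hπm : π m = j1 := π.apply_symm_apply j1
  have hmj : m ≠ j := fun h => hnice (h ▸ hπm)
  have hmj1 : m ≠ j1 := fun h => hfj1 (h ▸ hπm)
  have hjj1 : j ≠ j1 := by intro h; rw [h] at hj1; omega
  have hkey : ∀ k : Fin d, π k = j1 ↔ k = m := by
    intro k
    rw [← hπm, π.injective.eq_iff]
  apply Finset.card_le_card_of_injOn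
    (fun k => if k = j then j1 else if k = m then (if (m : ℕ) < (j1 : ℕ) then j else m) else k)
  · intro k hk
    simp only [Finset.mem_coe, Finset.mem_filter, Finset.mem_erase, Finset.mem_univ, true_and] at hk ⊢
    obtain ⟨hkj1, hcond⟩ := hk
    by_cases hkj : k = j
    · rw [if_pos hkj] at hcond ⊢
      have hc : (π j1 : ℕ) ≤ (j : ℕ) := hkj ▸ hcond
      exact Fin.le_def.mpr (by omega)
    · by_cases hkm : k = m
      · rw [if_neg hkj, if_pos ((hkey k).mpr hkm)] at hcond
        rw [if_neg hkj, if_pos hkm]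
        have hc : (π j : ℕ) ≤ (k : ℕ) := hcond
        have hkm' : (k : ℕ) = (m : ℕ) := by rw [hkm]
        by_cases hlt : (m : ℕ) < (j1 : ℕ)
        · rw [if_pos hlt]
          exact Fin.le_def.mpr (by omega)
        · rw [if_neg hlt, hπm]
          exact Fin.le_def.mpr (by omega)
      · rw [if_neg hkj, if_neg (fun h => hkm ((hkey k).mp h))] at hcond
        rw [if_neg hkj, if_neg hkm]
        exact hcond
  · intro a ha b hb hab
    simp only [Finset.coe_filter, Set.mem_setOf_eq, Finset.mem_erase, Finset.mem_univ,
      true_and] at ha hb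
    have haj1 : a ≠ j1 := ha.1.1
    have hbj1 : b ≠ j1 := hb.1.1
    simp only at hab
    by_cases haj : a = j <;> by_cases hbj : b = j
    · rw [haj, hbj]
    · rw [if_pos haj, if_neg hbj] at hab
      by_cases hbm : b = m
      · rw [if_pos hbm] at hab
        split_ifs at hab
        · exact absurd hab.symm hjj1
        · exact absurd hab.symm hmj1
      · rw [if_neg hbm] at hab
        exact absurd hab.symm hbj1
    · rw [if_neg haj, if_pos hbj] at hab
      by_cases ham : a = m
      · rw [if_pos ham] at hab
        split_ifs at hab
        · exact absurd hab hjj1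
        · exact absurd hab hmj1
      · rw [if_neg ham] at hab
        exact absurd hab haj1
    · rw [if_neg haj, if_neg hbj] at hab
      by_cases ham : a = m <;> by_cases hbm : b = m
      · rw [ham, hbm]
      · rw [if_pos ham, if_neg hbm] at hab
        split_ifs at hab
        · exact absurd hab.symm hbj
        · exact absurd hab.symm hbm
      · rw [if_neg ham, if_pos hbm] at hab
        split_ifs at hab
        · exact absurd hab haj
        · exact absurd hab ham
      · rwa [if_neg ham, if_neg hbm] at hab
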